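/- Let S and X be finite alphabets with joint pmf P_{S,X}, strictly positive marginals P_S and P_X, and let X_H ⊆ X be a nonempty subset with P(X_H) = Σ_{x∈X_H} P_X(x) > 0 and P(X_H|s) = Σ_{x∈X_H} P_{X|S}(x|s). Let r_{Y|X} be any randomization mapping X_H into X_H, i.e., r_{Y|X}(y|x) ≥ 0 and Σ_{y∈X_H} r_{Y|X}(y|x) = 1 for each x ∈ X_H. Then it is impossible that for all y ∈ X_H with Σ_{x∈X_H} r_{Y|X}(y|x)P_X(x) > 0 and all s ∈ S, (Σ_{x∈X_H} r_{Y|X}(y|x)P_{X|S}(x|s)) / (Σ_{x∈X_H} r_{Y|X}(y|x)P_X(x)) > min_{s'} P(X_H|s')/P(X_H). Equivalently, the minimum lift achieved over the outputs of any randomization of X_H is at most min_{s} P(X_H|s)/P(X_H). -/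
import Mathlib


open Real BigOperators

/-- No randomization of the high-risk set can make every output lift strictly
    larger than the merged-set min-lift. -/
theorem no_randomization_beats_merging_min {S X : Type*} [Fintype S] [Fintype X] [Nonempty S]
    (Q : S → X → ℝ) (hQnn : ∀ s x, 0 ≤ Q s x) (hQsum : ∑ s, ∑ x, Q s x = 1)
    (PS : S → ℝ) (PX : X → ℝ)
    (hPS : ∀ s, PS s = ∑ x, Q s x) (hPX : ∀ x, PX x = ∑ s, Q s x)
    (hPSpos : ∀ s, 0 < PS s) (hPXpos : ∀ x, 0 < PX x)
    (XH : Finset X) (hXH : XH.Nonempty)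
    (hPXH : 0 < ∑ x ∈ XH, PX x)
    (r : X → X → ℝ)
    (hrnn : ∀ x ∈ XH, ∀ y ∈ XH, 0 ≤ r x y)
    (hrsum : ∀ x ∈ XH, ∑ y ∈ XH, r x y = 1) :
    ¬ (∀ y ∈ XH, 0 < ∑ x ∈ XH, r x y * PX x →
        ∀ s : S,
          (∑ x ∈ XH, r x y * (Q s x / PS s)) / (∑ x ∈ XH, r x y * PX x) >
            Finset.univ.inf' Finset.univ_nonempty
              (fun s' => (∑ x ∈ XH, Q s' x / PS s') / (∑ x ∈ XH, PX x))) := by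
  intro h
  set c := Finset.univ.inf' Finset.univ_nonempty
      (fun s' : S => (∑ x ∈ XH, Q s' x / PS s') / (∑ x ∈ XH, PX x)) with hc
  obtain ⟨s₀, -, hs₀⟩ := Finset.exists_mem_eq_inf' (Finset.univ_nonempty)
      (fun s' : S => (∑ x ∈ XH, Q s' x / PS s') / (∑ x ∈ XH, PX x))
  have hD : (0:ℝ) < ∑ x ∈ XH, PX x := hPXH
  have hden : ∀ y ∈ XH, 0 ≤ ∑ x ∈ XH, r x y * PX x := fun y hy =>
    Finset.sum_nonneg fun x hx => mul_nonneg (hrnn x hx y hy) (hPXpos x).le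
  -- weak inequality for every y
  have key : ∀ y ∈ XH, c * (∑ x ∈ XH, r x y * PX x) ≤ ∑ x ∈ XH, r x y * (Q s₀ x / PS s₀) := by
    intro y hy
    rcases lt_or_eq_of_le (hden y hy) with hpos | hzero
    · have hlt := h y hy hpos s₀
      exact le_of_lt ((lt_div_iff₀ hpos).mp hlt)
    · have hz : ∀ x ∈ XH, r x y = 0 := by
        intro x hx
        have h0 : ∀ x ∈ XH, 0 ≤ r x y * PX x := fun x hx =>
          mul_nonneg (hrnn x hx y hy) (hPXpos x).le
        have hxz := (Finset.sum_eq_zero_iff_of_nonneg h0).mp hzero.symm x hx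
        rcases mul_eq_zero.mp hxz with h1 | h2
        · exact h1
        · exact absurd h2 (hPXpos x).ne'
      have hnum : ∑ x ∈ XH, r x y * (Q s₀ x / PS s₀) = 0 :=
        Finset.sum_eq_zero fun x hx => by rw [hz x hx, zero_mul]
      rw [hnum, ← hzero, mul_zero]
  -- some y has positive denominator
  have hswap_den : ∑ y ∈ XH, ∑ x ∈ XH, r x y * PX x = ∑ x ∈ XH, PX x := by
    rw [Finset.sum_comm]
    refine Finset.sum_congr rfl fun x hx => ?_
    rw [← Finset.sum_mul, hrsum x hx, one_mul]
  have hswap_num : ∑ y ∈ XH, ∑ x ∈ XH, r x y * (Q s₀ x / PS s₀)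
      = ∑ x ∈ XH, Q s₀ x / PS s₀ := by
    rw [Finset.sum_comm]
    refine Finset.sum_congr rfl fun x hx => ?_
    rw [← Finset.sum_mul, hrsum x hx, one_mul]
  have hex : ∃ y ∈ XH, (0:ℝ) < ∑ x ∈ XH, r x y * PX x := by
    by_contra hcon
    push_neg at hcon
    have : ∑ y ∈ XH, ∑ x ∈ XH, r x y * PX x ≤ 0 :=
      Finset.sum_nonpos fun y hy => hcon y hy
    rw [hswap_den] at this
    exact absurd this (not_le.mpr hD)
  obtain ⟨y₀, hy₀, hy₀pos⟩ := hex
  have hstrict : ∑ y ∈ XH, c * (∑ x ∈ XH, r x y * PX x)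
      < ∑ y ∈ XH, ∑ x ∈ XH, r x y * (Q s₀ x / PS s₀) := by
    refine Finset.sum_lt_sum key ⟨y₀, hy₀, ?_⟩
    exact (lt_div_iff₀ hy₀pos).mp (h y₀ hy₀ hy₀pos s₀)
  rw [hswap_num, ← Finset.mul_sum, hswap_den] at hstrict
  have hEq : c * (∑ x ∈ XH, PX x) = ∑ x ∈ XH, Q s₀ x / PS s₀ := by
    rw [hc, hs₀, div_mul_cancel₀ _ hD.ne']
  rw [hEq] at hstrict
  exact lt_irrefl _ hstrict
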